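/- Let 0 < Y < 2, a ≥ 0 and μ > 0. Then Γ(Y/2) · ∫₀^∞ (1 − e^{−μx}) e^{−ax} x^{−1−Y/2} dx = ∫₀^∞ log(1 + μ/(a + z)) z^{Y/2−1} dz. -/

import Mathlib

open MeasureTheory Real

namespace GammaLevyAux

open Set

lemma one_sub_exp_le {u : ℝ} : 1 - Real.exp (-u) ≤ u := by
  have := Real.add_one_le_exp (-u); linarith

lemma one_sub_exp_nonneg {u : ℝ} (hu : 0 ≤ u) : 0 ≤ 1 - Real.exp (-u) := by
  have : Real.exp (-u) ≤ 1 := Real.exp_le_one_iff.mpr (by linarith)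
  linarith

lemma interval_exp (c : ℝ) (hc : c ≠ 0) (a b : ℝ) :
    ∫ t in a..b, Real.exp (c * t) = (Real.exp (c * b) - Real.exp (c * a)) / c := by
  have D : ∀ x : ℝ, HasDerivAt (fun y : ℝ => Real.exp (c * y) / c) (Real.exp (c * x)) x := by
    intro x
    rw [← mul_div_cancel_right₀ (Real.exp (c * x)) hc]
    exact ((Real.hasDerivAt_exp (c * x)).comp x
      (by simpa using (hasDerivAt_id x).const_mul c)).div_const c
  rw [intervalIntegral.integral_deriv_eq_sub' _ (funext fun x => (D x).deriv)
    (fun x _ => (D x).differentiableAt) (by fun_prop)]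
  ring

lemma integral_exp_neg_mul_Ioi' {c : ℝ} (hc : 0 < c) :
    ∫ x in Ioi (0 : ℝ), Real.exp (-(c * x)) = c⁻¹ := by
  have h := Real.integral_rpow_mul_exp_neg_mul_Ioi (a := 1) zero_lt_one hc
  simpa using h

lemma gamma_inner {s x : ℝ} (hs : 0 < s) (hx : 0 < x) :
    ∫ z in Ioi (0 : ℝ), Real.exp (-(x * z)) * z ^ (s - 1 : ℝ)
      = Real.Gamma s * x ^ (-s : ℝ) := by
  have h := Real.integral_rpow_mul_exp_neg_mul_Ioi (a := s) hs hx
  rw [show (∫ z in Ioi (0 : ℝ), Real.exp (-(x * z)) * z ^ (s - 1 : ℝ))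
      = ∫ t in Ioi (0 : ℝ), t ^ (s - 1 : ℝ) * Real.exp (-(x * t)) by
    exact setIntegral_congr_fun measurableSet_Ioi fun t _ => mul_comm _ _, h]
  rw [one_div, Real.inv_rpow hx.le, ← Real.rpow_neg hx.le]
  ring

lemma frullani_key {b x : ℝ} (hx : 0 < x) {m : ℝ} (hm : 0 ≤ m) :
    ∫ t in Ioc (0 : ℝ) m, Real.exp (-((b + t) * x))
      = (1 - Real.exp (-(m * x))) * Real.exp (-(b * x)) / x := by
  rw [← intervalIntegral.integral_of_le hm]
  have : ∀ t : ℝ, Real.exp (-((b + t) * x)) = Real.exp ((-x) * t) * Real.exp (-(b * x)) := by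
    intro t; rw [← Real.exp_add]; ring_nf
  simp_rw [this, intervalIntegral.integral_mul_const,
    interval_exp (-x) (neg_ne_zero.mpr hx.ne') 0 m]
  rw [show (-x) * m = -(m * x) by ring, mul_zero, Real.exp_zero, div_mul_eq_mul_div,
    div_eq_div_iff (neg_ne_zero.mpr hx.ne') hx.ne']
  ring

lemma frullani {b m : ℝ} (hb : 0 < b) (hm : 0 < m) :
    ∫ x in Ioi (0 : ℝ), (1 - Real.exp (-(m * x))) * Real.exp (-(b * x)) / x
      = Real.log (1 + m / b) := by
  set f : ℝ → ℝ → ℝ := fun x t => Real.exp (-((b + t) * x)) with hf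
  have hcont : Continuous (Function.uncurry f) := by
    simp only [hf, Function.uncurry]; fun_prop
  have hmeas : AEStronglyMeasurable (Function.uncurry f)
      ((volume.restrict (Ioi (0 : ℝ))).prod (volume.restrict (Ioc (0 : ℝ) m))) :=
    hcont.aestronglyMeasurable
  -- integrability of the left-hand function
  have hL : IntegrableOn (fun x => (1 - Real.exp (-(m * x))) * Real.exp (-(b * x)) / x)
      (Ioi (0 : ℝ)) := by
    have hg : IntegrableOn (fun x => m * Real.exp (-(b * x))) (Ioi (0 : ℝ)) := by
      have := (exp_neg_integrableOn_Ioi 0 hb).const_mul m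
      simpa [neg_mul, IntegrableOn] using this
    refine Integrable.mono hg (Measurable.aestronglyMeasurable (by fun_prop)) ?_
    rw [ae_restrict_iff' measurableSet_Ioi]
    refine ae_of_all _ fun x hx => ?_
    have hx0 : (0 : ℝ) < x := hx
    have h1 : 0 ≤ 1 - Real.exp (-(m * x)) := one_sub_exp_nonneg (by positivity)
    have h2 : 1 - Real.exp (-(m * x)) ≤ m * x := one_sub_exp_le
    have hep : (0 : ℝ) < Real.exp (-(b * x)) := Real.exp_pos _
    rw [Real.norm_eq_abs, Real.norm_eq_abs, abs_of_nonneg (by positivity),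
      abs_of_nonneg (by positivity), div_le_iff₀ hx0]
    nlinarith [mul_le_mul_of_nonneg_right h2 hep.le]
  have hInt : Integrable (Function.uncurry f)
      ((volume.restrict (Ioi (0 : ℝ))).prod (volume.restrict (Ioc (0 : ℝ) m))) := by
    rw [integrable_prod_iff hmeas]
    constructor
    · refine ae_of_all _ fun x => ?_
      exact (Continuous.integrableOn_Ioc (by fun_prop))
    · refine Integrable.congr hL (Filter.eventuallyEq_of_mem
        (self_mem_ae_restrict measurableSet_Ioi) fun x hx => ?_)
      have hx0 : (0 : ℝ) < x := hx
      rw [← frullani_key hx0 hm.le]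
      refine setIntegral_congr_fun measurableSet_Ioc fun t _ => ?_
      rw [Real.norm_eq_abs]
      exact (abs_of_pos (Real.exp_pos _)).symm
  have hswap := integral_integral_swap hInt
  calc ∫ x in Ioi (0 : ℝ), (1 - Real.exp (-(m * x))) * Real.exp (-(b * x)) / x
      = ∫ x in Ioi (0 : ℝ), ∫ t in Ioc (0 : ℝ) m, f x t := by
        refine setIntegral_congr_fun measurableSet_Ioi fun x hx => ?_
        exact (frullani_key hx hm.le).symm
    _ = ∫ t in Ioc (0 : ℝ) m, ∫ x in Ioi (0 : ℝ), f x t := hswap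
    _ = ∫ t in Ioc (0 : ℝ) m, (b + t)⁻¹ := by
        refine setIntegral_congr_fun measurableSet_Ioc fun t ht => ?_
        exact integral_exp_neg_mul_Ioi' (by linarith [ht.1])
    _ = Real.log (1 + m / b) := by
        rw [← intervalIntegral.integral_of_le hm.le]
        have : ∀ t : ℝ, (b + t)⁻¹ = (t + b)⁻¹ := fun t => by rw [add_comm]
        simp_rw [this]
        rw [intervalIntegral.integral_comp_add_right (fun u => u⁻¹) b, zero_add,
          integral_inv_of_pos hb (by linarith)]
        congr 1
        field_simp
        ring

end GammaLevyAux

open GammaLevyAux Set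

theorem gamma_levy_log_identity (Y a μ : ℝ) (hY : 0 < Y) (hY2 : Y < 2)
    (ha : 0 ≤ a) (hμ : 0 < μ) :
    Real.Gamma (Y / 2) *
        ∫ x in Set.Ioi (0 : ℝ),
          (1 - Real.exp (-μ * x)) * Real.exp (-a * x) * x ^ (-1 - Y / 2 : ℝ)
      = ∫ z in Set.Ioi (0 : ℝ), Real.log (1 + μ / (a + z)) * z ^ (Y / 2 - 1 : ℝ) := by
  set s : ℝ := Y / 2 with hs_def
  have hs : 0 < s := by positivity
  have hs1 : s < 1 := by rw [hs_def]; linarith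
  set F : ℝ → ℝ → ℝ := fun x z =>
    ((1 - Real.exp (-(μ * x))) * Real.exp (-(a * x)) / x) *
      (Real.exp (-(x * z)) * z ^ (s - 1 : ℝ)) with hF
  -- integrability of the LHS integrand
  have hLmeas : AEStronglyMeasurable
      (fun x : ℝ => (1 - Real.exp (-(μ * x))) * Real.exp (-(a * x)) * x ^ (-1 - s : ℝ))
      (volume.restrict (Ioi (0 : ℝ))) :=
    Measurable.aestronglyMeasurable (by fun_prop)
  have hL : IntegrableOn
      (fun x => (1 - Real.exp (-(μ * x))) * Real.exp (-(a * x)) * x ^ (-1 - s : ℝ))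
      (Ioi (0 : ℝ)) := by
    rw [← Ioc_union_Ioi_eq_Ioi (zero_le_one : (0 : ℝ) ≤ 1)]
    refine IntegrableOn.union ?_ ?_
    · -- on Ioc 0 1, bound by μ * x ^ (-s)
      have hg : IntegrableOn (fun x : ℝ => μ * x ^ (-s : ℝ)) (Ioc (0 : ℝ) 1) := by
        have h0 : IntegrableOn (fun x : ℝ => x ^ (-s : ℝ)) (Ioc (0 : ℝ) 1) := by
          rw [integrableOn_Ioc_iff_integrableOn_Ioo]
          exact (intervalIntegral.integrableOn_Ioo_rpow_iff one_pos).mpr (by linarith)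
        exact h0.const_mul μ
      refine Integrable.mono hg (hLmeas.mono_measure
        (Measure.restrict_mono Ioc_subset_Ioi_self le_rfl)) ?_
      rw [ae_restrict_iff' measurableSet_Ioc]
      refine ae_of_all _ fun x hx => ?_
      have hx0 : (0 : ℝ) < x := hx.1
      have h1 : 0 ≤ 1 - Real.exp (-(μ * x)) := one_sub_exp_nonneg (by positivity)
      have h2 : 1 - Real.exp (-(μ * x)) ≤ μ * x := one_sub_exp_le
      have h3 : Real.exp (-(a * x)) ≤ 1 := Real.exp_le_one_iff.mpr (by nlinarith)
      have hrp : (0 : ℝ) < x ^ (-1 - s : ℝ) := Real.rpow_pos_of_pos hx0 _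
      have hxx : x * x ^ (-1 - s : ℝ) = x ^ (-s : ℝ) := by
        rw [show (-s : ℝ) = 1 + (-1 - s) by ring, Real.rpow_add hx0, Real.rpow_one]
      rw [Real.norm_eq_abs, Real.norm_eq_abs, abs_of_nonneg (by positivity),
        abs_of_nonneg (by positivity)]
      calc (1 - Real.exp (-(μ * x))) * Real.exp (-(a * x)) * x ^ (-1 - s : ℝ)
          ≤ (μ * x) * 1 * x ^ (-1 - s : ℝ) := by
            refine mul_le_mul_of_nonneg_right ?_ hrp.le
            exact mul_le_mul h2 h3 (Real.exp_pos _).le (by positivity)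
        _ = μ * x ^ (-s : ℝ) := by rw [mul_one, mul_assoc, hxx]
    · -- on Ioi 1, bound by x ^ (-1 - s)
      have hg : IntegrableOn (fun x : ℝ => x ^ (-1 - s : ℝ)) (Ioi (1 : ℝ)) :=
        integrableOn_Ioi_rpow_of_lt (by linarith) one_pos
      refine Integrable.mono hg (hLmeas.mono_measure
        (Measure.restrict_mono (Ioi_subset_Ioi zero_le_one) le_rfl)) ?_
      rw [ae_restrict_iff' measurableSet_Ioi]
      refine ae_of_all _ fun x hx => ?_
      have hx0 : (0 : ℝ) < x := lt_trans one_pos hx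
      have h1 : 0 ≤ 1 - Real.exp (-(μ * x)) := one_sub_exp_nonneg (by positivity)
      have h1' : 1 - Real.exp (-(μ * x)) ≤ 1 := by linarith [Real.exp_pos (-(μ * x))]
      have h3 : Real.exp (-(a * x)) ≤ 1 := Real.exp_le_one_iff.mpr (by nlinarith)
      have hrp : (0 : ℝ) < x ^ (-1 - s : ℝ) := Real.rpow_pos_of_pos hx0 _
      rw [Real.norm_eq_abs, Real.norm_eq_abs, abs_of_nonneg (by positivity),
        abs_of_nonneg hrp.le]
      nlinarith [mul_le_mul h1' h3 (Real.exp_pos _).le zero_le_one]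
  -- the key pointwise identity for the inner z-integral
  have hinner : ∀ x ∈ Ioi (0 : ℝ),
      (∫ z in Ioi (0 : ℝ), F x z)
        = Real.Gamma s * ((1 - Real.exp (-(μ * x))) * Real.exp (-(a * x)) * x ^ (-1 - s : ℝ)) := by
    intro x hx
    have hx0 : (0 : ℝ) < x := hx
    rw [hF]
    simp only
    rw [MeasureTheory.integral_const_mul, gamma_inner hs hx0]
    have hxx : x ^ (-1 - s : ℝ) = x⁻¹ * x ^ (-s : ℝ) := by
      rw [show (-1 - s : ℝ) = -1 + -s by ring, Real.rpow_add hx0, Real.rpow_neg_one]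
    rw [hxx]; ring
  -- section integrability in z
  have hsec : ∀ x ∈ Ioi (0 : ℝ), Integrable (fun z => F x z)
      (volume.restrict (Ioi (0 : ℝ))) := by
    intro x hx
    have hx0 : (0 : ℝ) < x := hx
    have hbase : IntegrableOn (fun z : ℝ => Real.exp (-(x * z)) * z ^ (s - 1 : ℝ))
        (Ioi (0 : ℝ)) := by
      have := integrableOn_rpow_mul_exp_neg_mul_rpow (p := 1) (s := s - 1) (b := x)
        (by linarith) one_pos hx0
      refine this.congr_fun (fun z hz => ?_) measurableSet_Ioi
      beta_reduce
      rw [Real.rpow_one, mul_comm, neg_mul]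
    exact hbase.const_mul _
  -- measurability of F on the product
  have hFmeas : AEStronglyMeasurable (Function.uncurry F)
      ((volume.restrict (Ioi (0 : ℝ))).prod (volume.restrict (Ioi (0 : ℝ)))) :=
    Measurable.aestronglyMeasurable (by fun_prop)
  -- product integrability
  have hInt : Integrable (Function.uncurry F)
      ((volume.restrict (Ioi (0 : ℝ))).prod (volume.restrict (Ioi (0 : ℝ)))) := by
    rw [integrable_prod_iff hFmeas]
    constructor
    · rw [ae_restrict_iff' measurableSet_Ioi]
      exact ae_of_all _ hsec
    · refine Integrable.congr (hL.const_mul (Real.Gamma s)) (Filter.eventuallyEq_of_mem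
        (self_mem_ae_restrict measurableSet_Ioi) fun x hx => ?_)
      have hx0 : (0 : ℝ) < x := hx
      rw [← hinner x hx]
      refine setIntegral_congr_fun measurableSet_Ioi fun z hz => ?_
      have hz0 : (0 : ℝ) < z := hz
      have h1 : 0 ≤ 1 - Real.exp (-(μ * x)) := one_sub_exp_nonneg (by positivity)
      have hnn : 0 ≤ F x z :=
        mul_nonneg (div_nonneg (mul_nonneg h1 (Real.exp_pos _).le) hx0.le)
          (mul_nonneg (Real.exp_pos _).le (Real.rpow_nonneg hz0.le _))
      rw [Real.norm_eq_abs]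
      exact (abs_of_nonneg hnn).symm
  have hswap := integral_integral_swap hInt
  calc Real.Gamma s *
        ∫ x in Ioi (0 : ℝ),
          (1 - Real.exp (-μ * x)) * Real.exp (-a * x) * x ^ (-1 - s : ℝ)
      = ∫ x in Ioi (0 : ℝ), ∫ z in Ioi (0 : ℝ), F x z := by
        rw [← MeasureTheory.integral_const_mul]
        refine setIntegral_congr_fun measurableSet_Ioi fun x hx => ?_
        rw [hinner x hx, neg_mul, neg_mul]
    _ = ∫ z in Ioi (0 : ℝ), ∫ x in Ioi (0 : ℝ), F x z := hswap
    _ = ∫ z in Ioi (0 : ℝ), Real.log (1 + μ / (a + z)) * z ^ (s - 1 : ℝ) := by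
        refine setIntegral_congr_fun measurableSet_Ioi fun z hz => ?_
        have hz0 : (0 : ℝ) < z := hz
        have haz : 0 < a + z := by linarith
        have : (∫ x in Ioi (0 : ℝ), F x z)
            = z ^ (s - 1 : ℝ) *
              ∫ x in Ioi (0 : ℝ),
                (1 - Real.exp (-(μ * x))) * Real.exp (-((a + z) * x)) / x := by
          rw [← MeasureTheory.integral_const_mul]
          refine setIntegral_congr_fun measurableSet_Ioi fun x hx => ?_
          rw [hF]; simp only
          rw [show -((a + z) * x) = -(a * x) + -(x * z) by ring, Real.exp_add]
          ring
        rw [this, frullani haz hμ]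
        ring
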